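/- Quantum blobs are fixed points of symplectic polar duality: for every S ∈ Sp(n), the quantum blob Q = S(B^{2n}(√ħ)) satisfies Q^{ħ,ω} = Q. -/

import Mathlib

open Matrix ComplexOrder MeasureTheory

noncomputable section

/-- Phase space ℝ^{2n} ≃ ℝⁿ × ℝⁿ, with coordinates z = (x,p). -/
abbrev PS (n : ℕ) := Fin n ⊕ Fin n → ℝ

/-- The standard symplectic matrix J = [[0, I], [-I, 0]]. -/
def Jmat (n : ℕ) : Matrix (Fin n ⊕ Fin n) (Fin n ⊕ Fin n) ℝ :=
  Matrix.fromBlocks 0 1 (-1) 0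

/-- The standard symplectic form ω(z,z′) = (Jz)·z′. -/
def symp (n : ℕ) (z z' : PS n) : ℝ := (Jmat n).mulVec z ⬝ᵥ z'

/-- The symplectic group Sp(n) = {S : SᵀJS = J}. -/
def Sp (n : ℕ) : Set (Matrix (Fin n ⊕ Fin n) (Fin n ⊕ Fin n) ℝ) :=
  {S | Sᵀ * Jmat n * S = Jmat n}

/-- Symplectic ℏ-polar dual Ω^{ℏ,ω} = {z′ : sup_{z∈Ω} ω(z,z′) ≤ ℏ}. -/
def sympDual (n : ℕ) (ℏ : ℝ) (Ω : Set (PS n)) : Set (PS n) :=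
  {z' | ∀ z ∈ Ω, symp n z z' ≤ ℏ}

/-- The closed Euclidean ball B^{2n}(√ℏ) of radius √ℏ centered at 0. -/
def ball2n (n : ℕ) (ℏ : ℝ) : Set (PS n) := {z | z ⬝ᵥ z ≤ ℏ}

/-- The covariance ellipsoid Ω_Σ = {z : (1/2)Σ⁻¹z·z ≤ 1}. -/
def covEll (n : ℕ) (Sig : Matrix (Fin n ⊕ Fin n) (Fin n ⊕ Fin n) ℝ) : Set (PS n) :=
  {z | (1 / 2 : ℝ) * (Sig⁻¹.mulVec z ⬝ᵥ z) ≤ 1}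
lemma Jmat_transpose (n : ℕ) : (Jmat n)ᵀ = -(Jmat n) := by
  simp [Jmat, Matrix.fromBlocks_transpose, Matrix.fromBlocks_neg]

lemma Jmat_mul_Jmat (n : ℕ) : Jmat n * Jmat n = -1 := by
  simp [Jmat, Matrix.fromBlocks_multiply]
  ext i j
  cases i <;> cases j <;> simp [Matrix.fromBlocks, Matrix.one_apply]

lemma my_dot_self_nonneg {n : ℕ} (v : PS n) : 0 ≤ v ⬝ᵥ v :=
  Finset.sum_nonneg fun i _ => mul_self_nonneg _

lemma mulVec_dot {n : ℕ} (A : Matrix (Fin n ⊕ Fin n) (Fin n ⊕ Fin n) ℝ)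
    (x y : PS n) : A.mulVec x ⬝ᵥ y = x ⬝ᵥ Aᵀ.mulVec y := by
  rw [← Matrix.vecMul_transpose, ← Matrix.dotProduct_mulVec]

lemma mulVec_dot_mulVec {n : ℕ} (A B : Matrix (Fin n ⊕ Fin n) (Fin n ⊕ Fin n) ℝ)
    (x y : PS n) : A.mulVec x ⬝ᵥ B.mulVec y = x ⬝ᵥ (Aᵀ * B).mulVec y := by
  rw [← Matrix.vecMul_transpose, ← Matrix.dotProduct_mulVec, Matrix.mulVec_mulVec]

lemma Jmat_isometry {n : ℕ} (x : PS n) :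
    (Jmat n).mulVec x ⬝ᵥ (Jmat n).mulVec x = x ⬝ᵥ x := by
  rw [mulVec_dot_mulVec, Jmat_transpose, Matrix.neg_mul, Jmat_mul_Jmat, neg_neg,
    Matrix.one_mulVec]

/-- The ball is self-dual. -/
lemma sympDual_ball (n : ℕ) (ℏ : ℝ) (hℏ : 0 < ℏ) :
    sympDual n ℏ (ball2n n ℏ) = ball2n n ℏ := by
  ext z'
  constructor
  · intro h
    by_cases hz : z' ⬝ᵥ z' = 0
    · simp only [ball2n, Set.mem_setOf_eq, hz]; exact hℏ.le
    · have ha : 0 < z' ⬝ᵥ z' := lt_of_le_of_ne (my_dot_self_nonneg z') (Ne.symm hz)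
      set a := z' ⬝ᵥ z' with ha'
      set c : ℝ := Real.sqrt ℏ / Real.sqrt a with hc
      have hsa : 0 < Real.sqrt a := Real.sqrt_pos.2 ha
      have hsh : 0 < Real.sqrt ℏ := Real.sqrt_pos.2 hℏ
      set z : PS n := c • ((-(Jmat n)).mulVec z') with hzdef
      have hJz : (Jmat n).mulVec z = c • z' := by
        rw [hzdef, Matrix.mulVec_smul, Matrix.mulVec_mulVec]
        have h2 : Jmat n * -(Jmat n) = 1 := by
          rw [Matrix.mul_neg, Jmat_mul_Jmat]; simp
        rw [h2, Matrix.one_mulVec]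
      have hzz : z ⬝ᵥ z = c ^ 2 * a := by
        rw [hzdef, smul_dotProduct, dotProduct_smul]
        have h1 : (-(Jmat n)).mulVec z' ⬝ᵥ (-(Jmat n)).mulVec z' = z' ⬝ᵥ z' := by
          rw [mulVec_dot_mulVec, Matrix.transpose_neg, Jmat_transpose, neg_neg,
            Matrix.mul_neg, Jmat_mul_Jmat, neg_neg, Matrix.one_mulVec]
        rw [h1, smul_eq_mul, smul_eq_mul, ← ha']; ring
      have hc2 : c ^ 2 * a = ℏ := by
        rw [hc, div_pow, Real.sq_sqrt hℏ.le, Real.sq_sqrt ha.le]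
        field_simp
      have hmem : z ∈ ball2n n ℏ := by
        simp only [ball2n, Set.mem_setOf_eq, hzz, hc2, le_refl]
      have hsymp := h z hmem
      have hval : symp n z z' = c * a := by
        rw [symp, hJz, smul_dotProduct, smul_eq_mul, ← ha']
      rw [hval] at hsymp
      -- c * a = √ℏ * √a ≤ ℏ = √ℏ * √ℏ ⟹ √a ≤ √ℏ ⟹ a ≤ ℏ
      have hca : c * a = Real.sqrt ℏ * Real.sqrt a := by
        rw [hc, div_mul_eq_mul_div, mul_div_assoc, Real.div_sqrt]
      rw [hca] at hsymp
      have hh : ℏ = Real.sqrt ℏ * Real.sqrt ℏ := (Real.mul_self_sqrt hℏ.le).symm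
      have haa : a = Real.sqrt a * Real.sqrt a := (Real.mul_self_sqrt ha.le).symm
      show a ≤ ℏ
      nlinarith [hsymp, hsa, hsh]
  · intro hz' z hz
    have hb : z ⬝ᵥ z ≤ ℏ := hz
    have hb' : z' ⬝ᵥ z' ≤ ℏ := hz'
    have cs := Finset.sum_mul_sq_le_sq_mul_sq Finset.univ ((Jmat n).mulVec z) z'
    have h1 : symp n z z' ^ 2 ≤ (z ⬝ᵥ z) * (z' ⬝ᵥ z') := by
      have e1 : symp n z z' = ∑ i : Fin n ⊕ Fin n, ((Jmat n).mulVec z) i * z' i := rfl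
      have e2 : (z ⬝ᵥ z) = ∑ i : Fin n ⊕ Fin n, ((Jmat n).mulVec z) i ^ 2 := by
        rw [← Jmat_isometry z]
        simp [dotProduct, sq]
      have e3 : (z' ⬝ᵥ z') = ∑ i : Fin n ⊕ Fin n, z' i ^ 2 := by simp [dotProduct, sq]
      rw [e1, e2, e3]; exact cs
    have hzz := my_dot_self_nonneg z
    have hz'z' := my_dot_self_nonneg z'
    have hmul : (z ⬝ᵥ z) * (z' ⬝ᵥ z') ≤ ℏ * ℏ := mul_le_mul hb hb' hz'z' hℏ.le
    nlinarith [h1, hmul, hℏ]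

/-- Quantum blobs are fixed points of symplectic polar duality: Q^{ℏ,ω} = Q for
Q = S(B^{2n}(√ℏ)), S ∈ Sp(n). -/
theorem sympDual_quantum_blob (n : ℕ) (ℏ : ℝ) (hℏ : 0 < ℏ)
    (S : Matrix (Fin n ⊕ Fin n) (Fin n ⊕ Fin n) ℝ) (hS : S ∈ Sp n) :
    sympDual n ℏ (S.mulVec '' ball2n n ℏ) = S.mulVec '' ball2n n ℏ := by
  have hJJ := Jmat_mul_Jmat n
  have hdetJ : IsUnit (Jmat n).det := by
    have : (Jmat n).det * (Jmat n).det = (-1 : Matrix (Fin n ⊕ Fin n) (Fin n ⊕ Fin n) ℝ).det := by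
      rw [← Matrix.det_mul, hJJ]
    rw [Matrix.det_neg, Matrix.det_one] at this
    apply IsUnit.of_mul_eq_one ((-1 : ℝ) ^ Fintype.card (Fin n ⊕ Fin n) * (Jmat n).det)
    have h4 : ((-1 : ℝ) ^ Fintype.card (Fin n ⊕ Fin n)) ^ 2 = 1 := by
      rw [← pow_mul, mul_comm, pow_mul]; simp
    nlinarith [this, h4]
  have hSdet : IsUnit S.det := by
    have h0 : Sᵀ * Jmat n * S = Jmat n := hS
    have : S.det * ((Jmat n).det * S.det) = (Jmat n).det := by
      have := congrArg Matrix.det h0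
      rw [Matrix.det_mul, Matrix.det_mul, Matrix.det_transpose] at this
      linarith [this]
    rcases hdetJ with ⟨u, hu⟩
    exact IsUnit.of_mul_eq_one ((Jmat n).det * S.det * (↑u⁻¹ : ℝ)) (by
      rw [← mul_assoc, this, ← hu]
      exact u.mul_inv)
  have hSinv : S * S⁻¹ = 1 := Matrix.mul_nonsing_inv S hSdet
  have hinvS : S⁻¹ * S = 1 := Matrix.nonsing_inv_mul S hSdet
  -- key: SᵀJ = J S⁻¹
  have hkey : Sᵀ * Jmat n = Jmat n * S⁻¹ := by
    have h0 : Sᵀ * Jmat n * S = Jmat n := hS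
    calc Sᵀ * Jmat n = Sᵀ * Jmat n * (S * S⁻¹) := by rw [hSinv, mul_one]
      _ = (Sᵀ * Jmat n * S) * S⁻¹ := by rw [← mul_assoc]
      _ = Jmat n * S⁻¹ := by rw [h0]
  -- symp (S w) z' = symp w (S⁻¹ z')
  have hsymp : ∀ w z' : PS n, symp n (S.mulVec w) z' = symp n w (S⁻¹.mulVec z') := by
    intro w z'
    rw [symp, symp, Matrix.mulVec_mulVec, mulVec_dot, mulVec_dot,
      Matrix.mulVec_mulVec]
    have hm : (Jmat n * S)ᵀ = (Jmat n)ᵀ * S⁻¹ := by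
      rw [Matrix.transpose_mul, Jmat_transpose, Matrix.mul_neg,
        Matrix.neg_mul, hkey]
    rw [hm]
  ext z'
  constructor
  · intro h
    refine ⟨S⁻¹.mulVec z', ?_, ?_⟩
    · have : S⁻¹.mulVec z' ∈ sympDual n ℏ (ball2n n ℏ) := by
        intro w hw
        rw [← hsymp w z']
        exact h (S.mulVec w) ⟨w, hw, rfl⟩
      rwa [sympDual_ball n ℏ hℏ] at this
    · rw [Matrix.mulVec_mulVec, hSinv, Matrix.one_mulVec]
  · rintro ⟨w, hw, rfl⟩ z ⟨v, hv, rfl⟩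
    rw [hsymp v (S.mulVec w), Matrix.mulVec_mulVec, hinvS, Matrix.one_mulVec]
    have : w ∈ sympDual n ℏ (ball2n n ℏ) := by rw [sympDual_ball n ℏ hℏ]; exact hw
    exact this v hv
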